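/- Let I be a finite set of positive integers (not containing 0) and I₀ = I ∪ {0}. Then for n > max(I), d_B(I;n) + d_B(I₀;n) = 2^n · d(I;n), where d(I;n) is the type A descent count. -/

import Mathlib

/-- The descent set of a permutation of `Fin n`, with positions 1-indexed:
`i ∈ descSet n π` iff `1 ≤ i ≤ n-1` and `π_i > π_{i+1}` (1-indexed entries). -/
def descSet (n : ℕ) (π : Equiv.Perm (Fin n)) : Finset ℕ :=
  (Finset.range n).filter fun i =>
    ∃ h : 0 < i ∧ i < n, π ⟨i, h.2⟩ < π ⟨i - 1, by omega⟩

/-- `dA I n` is the number of permutations in `S_n` with descent set exactly `I`. -/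
def dA (I : Finset ℕ) (n : ℕ) : ℕ :=
  (Finset.univ.filter fun π : Equiv.Perm (Fin n) => descSet n π = I).card

/-- A signed permutation of `[n]` is encoded as a pair `(π, ε)`: the entry in
(1-indexed) position `i` is `π_i` with sign `−` iff `ε` is true there.
`signedVal n π ε i` is that entry `β_i ∈ {±1,…,±n}` for `1 ≤ i ≤ n`, and `0`
otherwise (so in particular `β₀ = 0`). -/
def signedVal (n : ℕ) (π : Equiv.Perm (Fin n)) (ε : Fin n → Bool) (i : ℕ) : ℤ :=
  if h : 1 ≤ i ∧ i ≤ n then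
    (if ε ⟨i - 1, by omega⟩ then -(((π ⟨i - 1, by omega⟩ : ℕ) : ℤ) + 1)
     else ((π ⟨i - 1, by omega⟩ : ℕ) : ℤ) + 1)
  else 0

/-- The type `B` descent set `Des β = {i ≥ 0 : β_i > β_{i+1}} ⊆ {0,…,n−1}`,
with the convention `β₀ = 0`. -/
def descSetB (n : ℕ) (π : Equiv.Perm (Fin n)) (ε : Fin n → Bool) : Finset ℕ :=
  (Finset.range n).filter fun i => signedVal n π ε (i + 1) < signedVal n π ε i

/-- `dB I n` is the number of signed permutations in the hyperoctahedral group
`B_n` with descent set exactly `I`. -/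
def dB (I : Finset ℕ) (n : ℕ) : ℕ :=
  (Finset.univ.filter fun βε : Equiv.Perm (Fin n) × (Fin n → Bool) =>
    descSetB n βε.1 βε.2 = I).card

/-- `dD I n` is the number of elements of the type `D` Coxeter group `D_n`
(signed permutations with an even number of negative entries) with descent set
exactly `I`. -/
def dD (I : Finset ℕ) (n : ℕ) : ℕ :=
  (Finset.univ.filter fun βε : Equiv.Perm (Fin n) × (Fin n → Bool) =>
    descSetB n βε.1 βε.2 = I ∧
      Even (Finset.univ.filter fun i => βε.2 i = true).card).card


namespace Stmt18Aux

open Finset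

variable {n : ℕ}

def sval (n : ℕ) (δ : Fin n → Bool) (v : Fin n) : ℤ :=
  if δ v then -(((v : ℕ) : ℤ) + 1) else ((v : ℕ) : ℤ) + 1

lemma sval_inj (δ : Fin n → Bool) : Function.Injective (sval n δ) := by
  intro v w h
  apply Fin.ext
  unfold sval at h
  split_ifs at h <;> omega

def rkN (δ : Fin n → Bool) (v : Fin n) : ℕ :=
  (univ.filter fun w => sval n δ w < sval n δ v).card

lemma rkN_lt (δ : Fin n → Bool) (v : Fin n) : rkN δ v < n := by
  have h : (univ.filter fun w => sval n δ w < sval n δ v) ⊂ univ :=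
    Finset.filter_ssubset.mpr ⟨v, mem_univ v, by simp⟩
  simpa [rkN] using Finset.card_lt_card h

def rk (δ : Fin n → Bool) (v : Fin n) : Fin n := ⟨rkN δ v, rkN_lt δ v⟩

lemma rk_strict {δ : Fin n → Bool} {v w : Fin n} (h : sval n δ w < sval n δ v) :
    rk δ w < rk δ v := by
  apply Fin.mk_lt_mk.mpr
  apply Finset.card_lt_card
  rw [Finset.ssubset_iff_of_subset
    (by intro u hu; simp only [mem_filter] at hu ⊢; exact ⟨hu.1, hu.2.trans h⟩)]
  exact ⟨w, by simp [h], by simp⟩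

lemma rk_lt_iff {δ : Fin n → Bool} {v w : Fin n} :
    rk δ w < rk δ v ↔ sval n δ w < sval n δ v := by
  refine ⟨fun h => ?_, rk_strict⟩
  rcases lt_trichotomy (sval n δ w) (sval n δ v) with h'|h'|h'
  · exact h'
  · cases sval_inj δ h'; exact absurd h (lt_irrefl _)
  · exact absurd h (lt_asymm (rk_strict h'))

lemma rk_inj (δ : Fin n → Bool) : Function.Injective (rk δ) := by
  intro v w h
  by_contra hne
  have hs : sval n δ v ≠ sval n δ w := fun hs => hne (sval_inj δ hs)
  rcases hs.lt_or_gt with h'|h'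
  · exact absurd h (ne_of_lt (rk_strict h'))
  · exact absurd h.symm (ne_of_lt (rk_strict h'))

noncomputable def rkE (δ : Fin n → Bool) : Equiv.Perm (Fin n) :=
  Equiv.ofBijective (rk δ)
    ((Fintype.bijective_iff_injective_and_card _).mpr ⟨rk_inj δ, rfl⟩)

lemma signedVal_eq (π : Equiv.Perm (Fin n)) (ε : Fin n → Bool) (i : ℕ)
    (h1 : 1 ≤ i) (h2 : i ≤ n) :
    signedVal n π ε i = sval n (fun v => ε (π.symm v)) (π ⟨i - 1, by omega⟩) := by
  rw [signedVal, dif_pos ⟨h1, h2⟩, sval]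
  simp [Equiv.symm_apply_apply]

lemma descB_erase (π : Equiv.Perm (Fin n)) (ε : Fin n → Bool) :
    (descSetB n π ε).erase 0
      = descSet n (π.trans (rkE (fun v => ε (π.symm v)))) := by
  set δ := fun v => ε (π.symm v) with hδ
  ext i
  simp only [descSetB, descSet, Finset.mem_erase, Finset.mem_filter, Finset.mem_range]
  constructor
  · rintro ⟨hi0, him, hlt⟩
    have hip : 0 < i := Nat.pos_of_ne_zero hi0
    refine ⟨him, ⟨hip, him⟩, ?_⟩
    have e1 : signedVal n π ε (i + 1) = sval n δ (π ⟨i, him⟩) := by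
      rw [signedVal_eq π ε (i + 1) (by omega) (by omega)]
      rfl
    have e2 : signedVal n π ε i = sval n δ (π ⟨i - 1, by omega⟩) :=
      signedVal_eq π ε i (by omega) (by omega)
    rw [e1, e2] at hlt
    exact rk_lt_iff.mpr hlt
  · rintro ⟨him, ⟨hip, _⟩, hσ⟩
    refine ⟨by omega, him, ?_⟩
    have e1 : signedVal n π ε (i + 1) = sval n δ (π ⟨i, him⟩) := by
      rw [signedVal_eq π ε (i + 1) (by omega) (by omega)]
      rfl
    have e2 : signedVal n π ε i = sval n δ (π ⟨i - 1, by omega⟩) :=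
      signedVal_eq π ε i (by omega) (by omega)
    rw [e1, e2]
    exact rk_lt_iff.mp hσ

noncomputable def Φ (p : Equiv.Perm (Fin n) × (Fin n → Bool)) :
    Equiv.Perm (Fin n) × (Fin n → Bool) :=
  (p.1.trans (rkE fun v => p.2 (p.1.symm v)), fun v => p.2 (p.1.symm v))

lemma phi_inj : Function.Injective (Φ (n := n)) := by
  rintro ⟨π, ε⟩ ⟨π', ε'⟩ h
  simp only [Φ, Prod.mk.injEq] at h
  obtain ⟨h1, h2⟩ := h
  rw [h2] at h1
  have hπ : π = π' :=
    mul_left_cancel (a := rkE fun v => ε' (π'.symm v)) h1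
  subst hπ
  have hε : ε = ε' := by
    funext x
    have := congrFun h2 (π x)
    simpa using this
  rw [hε]

lemma count_erase (I : Finset ℕ) :
    (Finset.univ.filter fun p : Equiv.Perm (Fin n) × (Fin n → Bool) =>
      (descSetB n p.1 p.2).erase 0 = I).card = 2 ^ n * dA I n := by
  classical
  have key : (Finset.univ.filter fun p : Equiv.Perm (Fin n) × (Fin n → Bool) =>
        (descSetB n p.1 p.2).erase 0 = I).card
      = (Finset.univ.filter fun q : Equiv.Perm (Fin n) × (Fin n → Bool) =>
        descSet n q.1 = I).card := by
    apply Finset.card_bij (fun p _ => Φ p)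
    · intro p hp
      simp only [Finset.mem_filter, Finset.mem_univ, true_and] at hp ⊢
      rw [← hp, descB_erase p.1 p.2]
      rfl
    · intro p _ q _ h
      exact phi_inj h
    · intro q hq
      obtain ⟨p, hp⟩ := (Finite.injective_iff_surjective.mp phi_inj) q
      refine ⟨p, ?_, hp⟩
      simp only [Finset.mem_filter, Finset.mem_univ, true_and] at hq ⊢
      rw [descB_erase p.1 p.2]
      have h1 : (Φ p).1 = q.1 := congrArg Prod.fst hp
      calc descSet n (p.1.trans (rkE fun v => p.2 (p.1.symm v)))
          = descSet n (Φ p).1 := rfl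
        _ = descSet n q.1 := by rw [h1]
        _ = I := hq
  rw [key]
  have hprod : (Finset.univ.filter fun q : Equiv.Perm (Fin n) × (Fin n → Bool) =>
        descSet n q.1 = I)
      = (Finset.univ.filter fun σ : Equiv.Perm (Fin n) => descSet n σ = I) ×ˢ
        (Finset.univ : Finset (Fin n → Bool)) := by
    ext q
    simp [Finset.mem_product]
  rw [hprod, Finset.card_product, dA]
  simp [Finset.card_univ, mul_comm]

end Stmt18Aux

/-- Corollary 5.3: `d_B(I;n) + d_B(I ∪ {0};n) = 2^n d(I;n)` for a set `I` of
positive integers. -/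
theorem stmt_18 (I : Finset ℕ) (h0 : 0 ∉ I) (n : ℕ) (hn : I.sup id < n) :
    dB I n + dB (insert 0 I) n = 2 ^ n * dA I n := by
  classical
  have hdisj : Disjoint
      (Finset.univ.filter fun p : Equiv.Perm (Fin n) × (Fin n → Bool) =>
        descSetB n p.1 p.2 = I)
      (Finset.univ.filter fun p : Equiv.Perm (Fin n) × (Fin n → Bool) =>
        descSetB n p.1 p.2 = insert 0 I) := by
    rw [Finset.disjoint_filter]
    intro p _ h1 h2
    rw [h1] at h2
    apply h0
    rw [h2]
    exact Finset.mem_insert_self 0 I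
  unfold dB
  rw [← Finset.card_union_of_disjoint hdisj, ← Finset.filter_or]
  have hpred : ∀ p ∈ (Finset.univ : Finset (Equiv.Perm (Fin n) × (Fin n → Bool))),
      (descSetB n p.1 p.2 = I ∨ descSetB n p.1 p.2 = insert 0 I) ↔
        (descSetB n p.1 p.2).erase 0 = I := by
    intro p _
    constructor
    · rintro (h | h)
      · rw [h, Finset.erase_eq_of_notMem h0]
      · rw [h, Finset.erase_insert h0]
    · intro h
      by_cases hz : 0 ∈ descSetB n p.1 p.2
      · right
        rw [← h]
        exact (Finset.insert_erase hz).symm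
      · left
        rwa [Finset.erase_eq_of_notMem hz] at h
  rw [Finset.filter_congr hpred]
  exact Stmt18Aux.count_erase I
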